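/- arXiv:0907.0907 — 2 statements merged into one kernel-verified Lean document; each statement's English description precedes it below -/
import Mathlib

section
/- For every finite set P ⊆ U, the tiles of the compressed quadtree map QT(P) partition the unit square: the tiles of QT(P) are pairwise disjoint and their union equals U. -/
/-- The unit square `U = [0,1) × [0,1)`. -/
def unitSq : Set (ℝ × ℝ) := Set.Ico (0 : ℝ) 1 ×ˢ Set.Ico (0 : ℝ) 1

/-- The square `[i/2^k, (i+1)/2^k) × [j/2^k, (j+1)/2^k)`. -/
def canSq (k : ℕ) (i j : ℤ) : Set (ℝ × ℝ) :=
  Set.Ico ((i : ℝ) / 2 ^ k) (((i : ℝ) + 1) / 2 ^ k) ×ˢ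
    Set.Ico ((j : ℝ) / 2 ^ k) (((j : ℝ) + 1) / 2 ^ k)

/-- `σ` is a canonical square of side length `2⁻ᵏ`: it has the form
`[i/2^k, (i+1)/2^k) × [j/2^k, (j+1)/2^k)` with `0 ≤ i, j < 2^k`
(so it is contained in the unit square). -/
def IsCanSqSide (k : ℕ) (σ : Set (ℝ × ℝ)) : Prop :=
  ∃ i j : ℤ, 0 ≤ i ∧ i < 2 ^ k ∧ 0 ≤ j ∧ j < 2 ^ k ∧ σ = canSq k i j

/-- `σ` is a canonical square. -/
def IsCanSq (σ : Set (ℝ × ℝ)) : Prop := ∃ k : ℕ, IsCanSqSide k σ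

/-- `q` is one of the four quadrants of the canonical square `σ`: if `σ` has side
length `2⁻ᵏ`, the quadrants are the canonical squares of side length `2⁻⁽ᵏ⁺¹⁾`
contained in `σ`. -/
def IsQuadrantOf (q σ : Set (ℝ × ℝ)) : Prop :=
  ∃ k : ℕ, IsCanSqSide k σ ∧ IsCanSqSide (k + 1) q ∧ q ⊆ σ

/-- `σ` is the smallest canonical square containing `S`: it is a canonical square,
it contains `S`, and it is contained in every canonical square containing `S`. -/
def IsSmallestCanSq (S σ : Set (ℝ × ℝ)) : Prop :=
  IsCanSq σ ∧ S ⊆ σ ∧ ∀ τ : Set (ℝ × ℝ), IsCanSq τ → S ⊆ τ → σ ⊆ τ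

open scoped Classical

/-- `smallestCanSq S`: the smallest canonical square containing `S` (junk value `∅` if none exists). -/
noncomputable def smallestCanSq (S : Set (ℝ × ℝ)) : Set (ℝ × ℝ) :=
  if h : ∃ σ : Set (ℝ × ℝ), IsSmallestCanSq S σ then h.choose else ∅

/-- A canonical square `σ` is critical for `P` if at least two of its four
quadrants contain a point of `P`. -/
def Critical (P σ : Set (ℝ × ℝ)) : Prop :=
  IsCanSq σ ∧ ∃ q₁ q₂ : Set (ℝ × ℝ), IsQuadrantOf q₁ σ ∧ IsQuadrantOf q₂ σ ∧
    q₁ ≠ q₂ ∧ (P ∩ q₁).Nonempty ∧ (P ∩ q₂).Nonempty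

/-- The tiles of the compressed quadtree map `QT(P)`: (i) `U` itself if `|P| ≤ 1`;
(ii) the annulus `U \ sq(P)` if `|P| ≥ 2` and `sq(P) ≠ U`; (iii) for every
canonical square `σ` critical for `P` and every quadrant `q` of `σ`: the square
`q` if `|P ∩ q| ≤ 1`, and the annulus `q \ sq(P ∩ q)` if `|P ∩ q| ≥ 2` and
`sq(P ∩ q) ≠ q`. -/
noncomputable def QT (P : Set (ℝ × ℝ)) : Set (Set (ℝ × ℝ)) :=
  {f | (P.ncard ≤ 1 ∧ f = unitSq)
    ∨ (2 ≤ P.ncard ∧ smallestCanSq P ≠ unitSq ∧ f = unitSq \ smallestCanSq P)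
    ∨ (∃ σ q : Set (ℝ × ℝ), Critical P σ ∧ IsQuadrantOf q σ ∧
        (((P ∩ q).ncard ≤ 1 ∧ f = q)
          ∨ (2 ≤ (P ∩ q).ncard ∧ smallestCanSq (P ∩ q) ≠ q ∧ f = q \ smallestCanSq (P ∩ q))))}

lemma mem_canSq {x : ℝ × ℝ} {k : ℕ} {i j : ℤ} :
    x ∈ canSq k i j ↔ ⌊x.1 * 2^k⌋ = i ∧ ⌊x.2 * 2^k⌋ = j := by
  have h2 : (0:ℝ) < 2^k := by positivity
  simp only [canSq, Set.mem_prod, Set.mem_Ico, div_le_iff₀ h2, lt_div_iff₀ h2]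
  constructor
  · rintro ⟨⟨a,b⟩,c,d⟩
    constructor <;> rw [Int.floor_eq_iff] <;> push_cast <;> constructor <;> linarith
  · rintro ⟨ha, hb⟩
    rw [Int.floor_eq_iff] at ha hb
    push_cast at ha hb
    exact ⟨⟨by linarith [ha.1], by linarith [ha.2]⟩, by linarith [hb.1], by linarith [hb.2]⟩

lemma mem_canSq_self (k : ℕ) (i j : ℤ) : ((i:ℝ)/2^k, (j:ℝ)/2^k) ∈ canSq k i j := by
  have h2 : (2:ℝ)^k ≠ 0 := by positivity
  rw [mem_canSq]
  constructor <;> simp [div_mul_cancel₀, h2]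

lemma intFloor_div (r : ℝ) (n : ℤ) (hn : 0 < n) : ⌊r / (n:ℝ)⌋ = ⌊r⌋ / n := by
  set a : ℤ := ⌊r⌋ with ha
  have hnR : (0:ℝ) < (n:ℝ) := by exact_mod_cast hn
  have key : ((n:ℤ):ℝ) * ((a/n : ℤ):ℝ) + ((a%n : ℤ):ℝ) = (a:ℝ) := by
    exact_mod_cast congrArg (Int.cast : ℤ → ℝ) (Int.mul_ediv_add_emod a n)
  have hs0 : (0:ℝ) ≤ ((a%n : ℤ):ℝ) := by exact_mod_cast Int.emod_nonneg a (by omega)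
  have hs1 : ((a%n : ℤ):ℝ) + 1 ≤ n := by exact_mod_cast Int.add_one_le_iff.mpr (Int.emod_lt_of_pos a hn)
  have h1 : (a:ℝ) ≤ r := Int.floor_le r
  have h2 : r < a + 1 := Int.lt_floor_add_one r
  rw [Int.floor_eq_iff]
  constructor
  · rw [le_div_iff₀ hnR]
    nlinarith
  · rw [div_lt_iff₀ hnR]
    nlinarith

lemma floor_scale (r : ℝ) (k d : ℕ) : ⌊r * 2^k⌋ = ⌊r * 2^(k+d)⌋ / ((2:ℤ)^d) := by
  have h : r * 2^k = (r * 2^(k+d)) / (((2:ℤ)^d : ℤ) : ℝ) := by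
    push_cast
    rw [pow_add]
    field_simp
  rw [h, intFloor_div _ _ (by positivity)]

lemma canSq_subset {k k' : ℕ} {i j i' j' : ℤ} (hkk : k ≤ k') {x : ℝ×ℝ}
    (hx : x ∈ canSq k i j) (hx' : x ∈ canSq k' i' j') : canSq k' i' j' ⊆ canSq k i j := by
  obtain ⟨d, rfl⟩ := Nat.exists_eq_add_of_le hkk
  rw [mem_canSq] at hx hx'
  intro y hy
  rw [mem_canSq] at hy ⊢
  constructor
  · rw [floor_scale y.1 k d, hy.1, ← hx'.1, ← floor_scale, hx.1]
  · rw [floor_scale y.2 k d, hy.2, ← hx'.2, ← floor_scale, hx.2]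

lemma canSq_subset_unitSq {k : ℕ} {i j : ℤ} (hi0 : 0 ≤ i) (hi : i < 2^k) (hj0 : 0 ≤ j) (hj : j < 2^k) :
    canSq k i j ⊆ unitSq := by
  intro x hx
  obtain ⟨⟨h1,h2⟩,h3,h4⟩ := hx
  have h2k : (0:ℝ) < 2^k := by positivity
  have hi' : (i:ℝ) + 1 ≤ 2^k := by exact_mod_cast hi
  have hj' : (j:ℝ) + 1 ≤ 2^k := by exact_mod_cast hj
  have hi0' : (0:ℝ) ≤ i := by exact_mod_cast hi0
  have hj0' : (0:ℝ) ≤ j := by exact_mod_cast hj0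
  refine ⟨⟨?_,?_⟩,?_,?_⟩
  · have : (0:ℝ) ≤ (i:ℝ)/2^k := by positivity
    linarith
  · have : ((i:ℝ)+1)/2^k ≤ 1 := by rw [div_le_one h2k]; linarith
    linarith
  · have : (0:ℝ) ≤ (j:ℝ)/2^k := by positivity
    linarith
  · have : ((j:ℝ)+1)/2^k ≤ 1 := by rw [div_le_one h2k]; linarith
    linarith

lemma IsCanSqSide.subset_unitSq {k : ℕ} {σ : Set (ℝ×ℝ)} (h : IsCanSqSide k σ) : σ ⊆ unitSq := by
  obtain ⟨i,j,h1,h2,h3,h4,rfl⟩ := h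
  exact canSq_subset_unitSq h1 h2 h3 h4

lemma IsCanSqSide.nonempty {k : ℕ} {σ : Set (ℝ×ℝ)} (h : IsCanSqSide k σ) : σ.Nonempty := by
  obtain ⟨i,j,_,_,_,_,rfl⟩ := h
  exact ⟨_, mem_canSq_self k i j⟩

lemma unitSq_eq : unitSq = canSq 0 0 0 := by
  simp [unitSq, canSq]

lemma unitSq_side : IsCanSqSide 0 unitSq :=
  ⟨0, 0, le_refl _, by norm_num, le_refl _, by norm_num, unitSq_eq⟩

-- level uniqueness
lemma IsCanSqSide.level_unique {k k' : ℕ} {σ : Set (ℝ×ℝ)}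
    (h : IsCanSqSide k σ) (h' : IsCanSqSide k' σ) : k = k' := by
  obtain ⟨i,j,_,_,_,_,rfl⟩ := h
  obtain ⟨i',j',_,_,_,_,heq⟩ := h'
  have h2 : (0:ℝ) < 2^k := by positivity
  have h2' : (0:ℝ) < 2^k' := by positivity
  have hne : (Set.Ico ((i:ℝ)/2^k) (((i:ℝ)+1)/2^k) ×ˢ
      Set.Ico ((j:ℝ)/2^k) (((j:ℝ)+1)/2^k)).Nonempty := ⟨_, mem_canSq_self k i j⟩
  unfold canSq at heq
  rw [Set.prod_eq_prod_iff_of_nonempty hne] at heq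
  have hIco := heq.1
  rw [Set.Ico_eq_Ico_iff (Or.inl (by rw [div_lt_div_iff_of_pos_right h2]; linarith))] at hIco
  have e1 := hIco.1
  have e2 := hIco.2
  have hpow : (2:ℝ)^k = 2^k' := by
    field_simp at e1 e2
    nlinarith [e1, e2]
  exact pow_right_injective₀ (by norm_num) (by norm_num) hpow

lemma canSq_eq_of_mem {k : ℕ} {i j i' j' : ℤ} {x : ℝ×ℝ}
    (h : x ∈ canSq k i j) (h' : x ∈ canSq k i' j') : canSq k i j = canSq k i' j' := by
  rw [mem_canSq] at h h'
  rw [← h.1, ← h.2, ← h'.1, ← h'.2]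

lemma side_subset_of_le {k k' : ℕ} {σ τ : Set (ℝ×ℝ)} (hσ : IsCanSqSide k σ)
    (hτ : IsCanSqSide k' τ) (hkk : k ≤ k') (h : (σ ∩ τ).Nonempty) : τ ⊆ σ := by
  obtain ⟨i,j,_,_,_,_,rfl⟩ := hσ
  obtain ⟨i',j',_,_,_,_,rfl⟩ := hτ
  obtain ⟨x, hx1, hx2⟩ := h
  exact canSq_subset hkk hx1 hx2

lemma IsCanSq.nested_or {σ τ : Set (ℝ×ℝ)} (hσ : IsCanSq σ) (hτ : IsCanSq τ)
    (h : (σ ∩ τ).Nonempty) : σ ⊆ τ ∨ τ ⊆ σ := by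
  obtain ⟨k, hσk⟩ := hσ
  obtain ⟨k', hτk⟩ := hτ
  rcases le_total k k' with hkk | hkk
  · exact Or.inr (side_subset_of_le hσk hτk hkk h)
  · exact Or.inl (side_subset_of_le hτk hσk hkk ⟨h.choose, h.choose_spec.2, h.choose_spec.1⟩)

lemma exists_quadrant_mem {k : ℕ} {σ : Set (ℝ×ℝ)} (hσ : IsCanSqSide k σ) {x : ℝ×ℝ} (hx : x ∈ σ) :
    ∃ q, IsCanSqSide (k+1) q ∧ q ⊆ σ ∧ x ∈ q := by
  have hxu := hσ.subset_unitSq hx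
  obtain ⟨⟨hx10,hx11⟩,hx20,hx21⟩ := hxu
  obtain ⟨i,j,_,_,_,_,rfl⟩ := hσ
  have hp : (0:ℝ) < 2^(k+1) := by positivity
  refine ⟨canSq (k+1) ⌊x.1*2^(k+1)⌋ ⌊x.2*2^(k+1)⌋,
    ⟨_,_, ?_, ?_, ?_, ?_, rfl⟩, ?_, mem_canSq.mpr ⟨rfl, rfl⟩⟩
  · exact Int.floor_nonneg.mpr (mul_nonneg hx10 (le_of_lt hp))
  · rw [Int.floor_lt]; push_cast; nlinarith
  · exact Int.floor_nonneg.mpr (mul_nonneg hx20 (le_of_lt hp))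
  · rw [Int.floor_lt]; push_cast; nlinarith
  · exact canSq_subset (Nat.le_succ k) hx (mem_canSq.mpr ⟨rfl,rfl⟩)

lemma quadrant_eq_of_mem {σ q₁ q₂ : Set (ℝ×ℝ)} {x : ℝ×ℝ} (h1 : IsQuadrantOf q₁ σ)
    (h2 : IsQuadrantOf q₂ σ) (hx1 : x ∈ q₁) (hx2 : x ∈ q₂) : q₁ = q₂ := by
  obtain ⟨k₁, hσ1, hq1, _⟩ := h1
  obtain ⟨k₂, hσ2, hq2, _⟩ := h2
  have hk : k₁ = k₂ := hσ1.level_unique hσ2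
  subst hk
  obtain ⟨i,j,_,_,_,_,rfl⟩ := hq1
  obtain ⟨i',j',_,_,_,_,rfl⟩ := hq2
  exact canSq_eq_of_mem hx1 hx2

lemma subset_quadrant {σ τ : Set (ℝ×ℝ)} (hσ : IsCanSq σ) (hτ : IsCanSq τ)
    (hsub : τ ⊆ σ) (hne : τ ≠ σ) : ∃ q, IsQuadrantOf q σ ∧ τ ⊆ q := by
  obtain ⟨k, hσk⟩ := hσ
  obtain ⟨k', hτk⟩ := hτ
  obtain ⟨x, hxτ⟩ := hτk.nonempty
  have hk : k + 1 ≤ k' := by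
    by_contra h
    push_neg at h
    have hστ : σ ⊆ τ := side_subset_of_le hτk hσk (by omega) ⟨x, hxτ, hsub hxτ⟩
    exact hne (subset_antisymm hsub hστ)
  obtain ⟨q, hqside, hqsub, hxq⟩ := exists_quadrant_mem hσk (hsub hxτ)
  exact ⟨q, ⟨k, hσk, hqside, hqsub⟩, side_subset_of_le hqside hτk hk ⟨x, hxq, hxτ⟩⟩

lemma IsSmallestCanSq.unique {S σ τ : Set (ℝ×ℝ)} (h : IsSmallestCanSq S σ)
    (h' : IsSmallestCanSq S τ) : σ = τ :=
  subset_antisymm (h.2.2 τ h'.1 h'.2.1) (h'.2.2 σ h.1 h.2.1)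

lemma isSmallest_smallestCanSq {S : Set (ℝ×ℝ)} (h : ∃ σ, IsSmallestCanSq S σ) :
    IsSmallestCanSq S (smallestCanSq S) := by
  rw [smallestCanSq, dif_pos h]
  exact h.choose_spec

lemma smallestCanSq_eq {S σ : Set (ℝ×ℝ)} (h : IsSmallestCanSq S σ) : smallestCanSq S = σ :=
  (isSmallest_smallestCanSq ⟨σ, h⟩).unique h

lemma exists_smallestCanSq {S : Set (ℝ×ℝ)} (hfin : S.Finite) (h2 : 2 ≤ S.ncard)
    (hsub : S ⊆ unitSq) : ∃ σ, IsSmallestCanSq S σ := by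
  obtain ⟨p, q, hp, hq, hpq⟩ := (Set.one_lt_ncard_iff hfin).mp (by omega)
  have hpu : p ∈ unitSq := hsub hp
  obtain ⟨⟨hp10, hp11⟩, hp20, hp21⟩ := hpu
  set F : ℕ → Set (ℝ×ℝ) := fun k => canSq k ⌊p.1*2^k⌋ ⌊p.2*2^k⌋ with hF
  have hpF : ∀ k, p ∈ F k := fun k => mem_canSq.mpr ⟨rfl, rfl⟩
  have hFside : ∀ k, IsCanSqSide k (F k) := by
    intro k
    have hpk : (0:ℝ) < 2^k := by positivity
    refine ⟨_, _, ?_, ?_, ?_, ?_, rfl⟩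
    · exact Int.floor_nonneg.mpr (mul_nonneg hp10 hpk.le)
    · rw [Int.floor_lt]; push_cast; nlinarith
    · exact Int.floor_nonneg.mpr (mul_nonneg hp20 hpk.le)
    · rw [Int.floor_lt]; push_cast; nlinarith
  set δ : ℝ := max |p.1 - q.1| |p.2 - q.2| with hδdef
  have hδ : 0 < δ := by
    have : p.1 ≠ q.1 ∨ p.2 ≠ q.2 := by
      by_contra h
      push_neg at h
      exact hpq (Prod.ext h.1 h.2)
    rcases this with h | h
    · exact lt_max_of_lt_left (abs_pos.mpr (sub_ne_zero_of_ne h))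
    · exact lt_max_of_lt_right (abs_pos.mpr (sub_ne_zero_of_ne h))
  have habs : ∀ a b : ℝ, ⌊a⌋ = ⌊b⌋ → |a - b| < 1 := by
    intro a b h
    have h1 := Int.floor_le a; have h2 := Int.lt_floor_add_one a
    have h3 := Int.floor_le b; have h4 := Int.lt_floor_add_one b
    rw [h] at h1 h2
    rw [abs_sub_lt_iff]
    constructor <;> linarith
  have key : ∀ k : ℕ, S ⊆ F k → δ * 2^k < 1 := by
    intro k hk
    have hqk := mem_canSq.mp (hk hq)
    have hpk : (0:ℝ) < 2^k := by positivity
    have e1 : |p.1 - q.1| * 2^k < 1 := by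
      calc |p.1 - q.1| * 2^k = |p.1*2^k - q.1*2^k| := by
            rw [← sub_mul, abs_mul, abs_of_pos hpk]
        _ < 1 := habs _ _ hqk.1.symm
    have e2 : |p.2 - q.2| * 2^k < 1 := by
      calc |p.2 - q.2| * 2^k = |p.2*2^k - q.2*2^k| := by
            rw [← sub_mul, abs_mul, abs_of_pos hpk]
        _ < 1 := habs _ _ hqk.2.symm
    calc δ * 2^k = max (|p.1-q.1| * 2^k) (|p.2-q.2| * 2^k) := max_mul_of_nonneg _ _ hpk.le
      _ < 1 := max_lt e1 e2
  set N : ℕ := ⌈1/δ⌉₊ + 1 with hN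
  have keyN : ∀ k : ℕ, S ⊆ F k → k ≤ N := by
    intro k hk
    have h1 := key k hk
    have h2' : (2:ℝ)^k < 1/δ := by
      rw [lt_div_iff₀ hδ]
      linarith [key k hk]
    have h3 : (k:ℝ) < 1/δ := lt_trans (by exact_mod_cast (Nat.lt_two_pow_self (n := k))) h2'
    have h4 : (k:ℝ) < (⌈1/δ⌉₊ : ℝ) + 1 := lt_of_lt_of_le h3 (by linarith [Nat.le_ceil (1/δ)])
    have : k < ⌈1/δ⌉₊ + 1 := by exact_mod_cast h4
    omega
  have hS0 : S ⊆ F 0 := by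
    have : F 0 = unitSq := by
      rw [hF]
      simp only [pow_zero, mul_one]
      rw [Int.floor_eq_zero_iff.mpr ⟨hp10, hp11⟩, Int.floor_eq_zero_iff.mpr ⟨hp20, hp21⟩,
        unitSq_eq]
    rw [this]
    exact hsub
  set m : ℕ := Nat.findGreatest (fun k => S ⊆ F k) N with hm
  have hSm : S ⊆ F m := Nat.findGreatest_spec (P := fun k => S ⊆ F k) (Nat.zero_le N) hS0
  refine ⟨F m, ⟨m, hFside m⟩, hSm, ?_⟩
  intro τ hτ hSτ
  obtain ⟨k', ⟨i, j, _, _, _, _, rfl⟩⟩ := hτ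
  have hpτ := mem_canSq.mp (hSτ hp)
  have hτF : canSq k' i j = F k' := by rw [hF, ← hpτ.1, ← hpτ.2]
  rw [hτF] at hSτ ⊢
  have hk'm : k' ≤ m := Nat.le_findGreatest (keyN k' hSτ) hSτ
  exact canSq_subset hk'm (hpF k') (hpF m)

lemma critical_iff {P σ : Set (ℝ×ℝ)} (hfin : P.Finite) :
    Critical P σ ↔ IsCanSq σ ∧ 2 ≤ (P ∩ σ).ncard ∧ IsSmallestCanSq (P ∩ σ) σ := by
  constructor
  · rintro ⟨hcan, q₁, q₂, hq₁, hq₂, hne, ⟨p₁, hp₁P, hp₁q⟩, ⟨p₂, hp₂P, hp₂q⟩⟩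
    obtain ⟨k₁, hσs₁, hq₁side, hq₁sub⟩ := id hq₁
    obtain ⟨k₂, hσs₂, hq₂side, hq₂sub⟩ := id hq₂
    have hp₁σ : p₁ ∈ P ∩ σ := ⟨hp₁P, hq₁sub hp₁q⟩
    have hp₂σ : p₂ ∈ P ∩ σ := ⟨hp₂P, hq₂sub hp₂q⟩
    have hpne : p₁ ≠ p₂ := by
      rintro rfl
      exact hne (quadrant_eq_of_mem hq₁ hq₂ hp₁q hp₂q)
    have hn2 : 2 ≤ (P ∩ σ).ncard :=
      (Set.one_lt_ncard_iff (hfin.inter_of_left σ)).mpr ⟨p₁, p₂, hp₁σ, hp₂σ, hpne⟩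
    refine ⟨hcan, hn2, hcan, Set.inter_subset_right, ?_⟩
    intro τ hτ hsubτ
    have hint : (σ ∩ τ).Nonempty := ⟨p₁, hp₁σ.2, hsubτ hp₁σ⟩
    rcases hcan.nested_or hτ hint with hst | hts
    · exact hst
    · by_cases he : τ = σ
      · rw [he]
      · obtain ⟨q, hq, htq⟩ := subset_quadrant hcan hτ hts he
        have h1 : q = q₁ := quadrant_eq_of_mem hq hq₁ (htq (hsubτ hp₁σ)) hp₁q
        have h2 : q = q₂ := quadrant_eq_of_mem hq hq₂ (htq (hsubτ hp₂σ)) hp₂q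
        exact (hne (h1 ▸ h2)).elim
  · rintro ⟨hcan, hn2, hsm⟩
    obtain ⟨k, hσk⟩ := id hcan
    obtain ⟨p₁, p₂, hp₁, hp₂, hpne⟩ := (Set.one_lt_ncard_iff (hfin.inter_of_left σ)).mp hn2
    obtain ⟨q₁, hq₁side, hq₁sub, hp₁q₁⟩ := exists_quadrant_mem hσk hp₁.2
    have hnotall : ¬ (P ∩ σ ⊆ q₁) := by
      intro hall
      have hσq₁ : σ ⊆ q₁ := hsm.2.2 q₁ ⟨k+1, hq₁side⟩ hall
      have heq : σ = q₁ := subset_antisymm hσq₁ hq₁sub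
      have : IsCanSqSide (k+1) σ := heq ▸ hq₁side
      have := hσk.level_unique this
      omega
    obtain ⟨p₃, hp₃, hp₃n⟩ := Set.not_subset.mp hnotall
    obtain ⟨q₂, hq₂side, hq₂sub, hp₃q₂⟩ := exists_quadrant_mem hσk hp₃.2
    have hqne : q₁ ≠ q₂ := by
      rintro rfl
      exact hp₃n hp₃q₂
    exact ⟨hcan, q₁, q₂, ⟨k, hσk, hq₁side, hq₁sub⟩, ⟨k, hσk, hq₂side, hq₂sub⟩, hqne,
      ⟨p₁, hp₁.1, hp₁q₁⟩, ⟨p₃, hp₃.1, hp₃q₂⟩⟩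

lemma no_cross {P σ₁ q₁ σ₂ q₂ g : Set (ℝ×ℝ)} {x : ℝ×ℝ} (hfin : P.Finite)
    (hc₁ : Critical P σ₁) (hq₁ : IsQuadrantOf q₁ σ₁) (hq₂ : IsQuadrantOf q₂ σ₂)
    (hd : ((P ∩ q₂).ncard ≤ 1 ∧ g = q₂) ∨
      (2 ≤ (P ∩ q₂).ncard ∧ smallestCanSq (P ∩ q₂) ≠ q₂ ∧ g = q₂ \ smallestCanSq (P ∩ q₂)))
    (hsub : q₁ ⊆ q₂) (hne : q₁ ≠ q₂) (hx1 : x ∈ q₁) (hxg : x ∈ g) : False := by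
  obtain ⟨k₁, hσ₁s, hq₁s, hq₁sub⟩ := hq₁
  obtain ⟨k₂, hσ₂s, hq₂s, hq₂sub⟩ := hq₂
  have hklt : k₂ + 1 ≤ k₁ := by
    by_contra h
    push_neg at h
    have hq21 : q₂ ⊆ q₁ := side_subset_of_le hq₁s hq₂s (by omega) ⟨x, hx1, hsub hx1⟩
    exact hne (subset_antisymm hsub hq21)
  have hσ₁q₂ : σ₁ ⊆ q₂ := side_subset_of_le hq₂s hσ₁s hklt ⟨x, hsub hx1, hq₁sub hx1⟩
  have hcrit := (critical_iff hfin).mp hc₁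
  have hmono : 2 ≤ (P ∩ q₂).ncard :=
    le_trans hcrit.2.1 (Set.ncard_le_ncard
      (Set.inter_subset_inter (subset_refl P) hσ₁q₂) (hfin.inter_of_left q₂))
  rcases hd with ⟨hle, _⟩ | ⟨_, _, hg⟩
  · omega
  · have hq₂u : P ∩ q₂ ⊆ unitSq := Set.inter_subset_right.trans hq₂s.subset_unitSq
    have hτ₂ := isSmallest_smallestCanSq (exists_smallestCanSq (hfin.inter_of_left q₂) hmono hq₂u)
    have hσ₁τ₂ : σ₁ ⊆ smallestCanSq (P ∩ q₂) :=
      hcrit.2.2.2.2 _ hτ₂.1 ((Set.inter_subset_inter (subset_refl P) hσ₁q₂).trans hτ₂.2.1)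
    rw [hg] at hxg
    exact hxg.2 (hσ₁τ₂ (hq₁sub hx1))

lemma exists_tile_rec {P : Set (ℝ×ℝ)} (hfin : P.Finite) :
    ∀ n (σ : Set (ℝ×ℝ)), (P ∩ σ).ncard ≤ n → 2 ≤ (P ∩ σ).ncard →
      IsSmallestCanSq (P ∩ σ) σ → ∀ x ∈ σ, ∃ f ∈ QT P, x ∈ f := by
  intro n
  induction n with
  | zero => intro σ h1 h2 _ x _; omega
  | succ n ih =>
    intro σ hle h2 hsm x hx
    have hcrit : Critical P σ := (critical_iff hfin).mpr ⟨hsm.1, h2, hsm⟩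
    obtain ⟨k, hσk⟩ := hsm.1
    obtain ⟨q, hqside, hqsub, hxq⟩ := exists_quadrant_mem hσk hx
    have hquad : IsQuadrantOf q σ := ⟨k, hσk, hqside, hqsub⟩
    by_cases hq1 : (P ∩ q).ncard ≤ 1
    · exact ⟨q, Or.inr (Or.inr ⟨σ, q, hcrit, hquad, Or.inl ⟨hq1, rfl⟩⟩), hxq⟩
    · have hq2 : 2 ≤ (P ∩ q).ncard := by omega
      have hPq_sub : P ∩ q ⊆ unitSq := Set.inter_subset_right.trans hqside.subset_unitSq
      have hτ : IsSmallestCanSq (P ∩ q) (smallestCanSq (P ∩ q)) :=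
        isSmallest_smallestCanSq (exists_smallestCanSq (hfin.inter_of_left q) hq2 hPq_sub)
      set τ := smallestCanSq (P ∩ q) with hτdef
      have hτq : τ ⊆ q := hτ.2.2 q ⟨k+1, hqside⟩ Set.inter_subset_right
      have hPτ : P ∩ τ = P ∩ q := by
        apply subset_antisymm (Set.inter_subset_inter (subset_refl P) hτq)
        intro z hz
        exact ⟨hz.1, hτ.2.1 hz⟩
      have hlt : (P ∩ q).ncard < (P ∩ σ).ncard := by
        apply Set.ncard_lt_ncard _ (hfin.inter_of_left σ)
        constructor
        · exact Set.inter_subset_inter (subset_refl P) hqsub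
        · obtain ⟨_, q₁, q₂, hq₁, hq₂, hne, ⟨p₁, hp₁P, hp₁q⟩, ⟨p₂, hp₂P, hp₂q⟩⟩ := hcrit
          intro hcon
          by_cases h1 : q = q₁
          · obtain ⟨k₂', _, _, hq₂sub⟩ := id hq₂
            have hp₂σ : p₂ ∈ P ∩ σ := ⟨hp₂P, hq₂sub hp₂q⟩
            have hmem : p₂ ∈ q := (hcon hp₂σ).2
            exact hne (quadrant_eq_of_mem hq₁ hq₂ (h1 ▸ hmem) hp₂q)
          · obtain ⟨k₁', _, _, hq₁sub⟩ := id hq₁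
            have hp₁σ : p₁ ∈ P ∩ σ := ⟨hp₁P, hq₁sub hp₁q⟩
            have hmem : p₁ ∈ q := (hcon hp₁σ).2
            exact h1 (quadrant_eq_of_mem hquad hq₁ hmem hp₁q)
      by_cases hxτ : x ∈ τ
      · exact ih τ (by rw [hPτ]; omega) (by rw [hPτ]; exact hq2) (by rw [hPτ]; exact hτ) x hxτ
      · have hτne : τ ≠ q := fun h => hxτ (h ▸ hxq)
        exact ⟨q \ τ, Or.inr (Or.inr ⟨σ, q, hcrit, hquad, Or.inr ⟨hq2, hτne, rfl⟩⟩), hxq, hxτ⟩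

lemma tile_subset {P f : Set (ℝ×ℝ)} (hf : f ∈ QT P) : f ⊆ unitSq := by
  rcases hf with ⟨_, rfl⟩ | ⟨_, _, rfl⟩ | ⟨σ, q, _, hq, hd⟩
  · exact subset_refl _
  · exact Set.diff_subset
  · obtain ⟨k, _, hqs, _⟩ := hq
    rcases hd with ⟨_, rfl⟩ | ⟨_, _, rfl⟩
    · exact hqs.subset_unitSq
    · exact Set.diff_subset.trans hqs.subset_unitSq

lemma exists_tile {P : Set (ℝ×ℝ)} (hfin : P.Finite) (hPU : P ⊆ unitSq) {x : ℝ×ℝ}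
    (hx : x ∈ unitSq) : ∃ f ∈ QT P, x ∈ f := by
  by_cases h1 : P.ncard ≤ 1
  · exact ⟨unitSq, Or.inl ⟨h1, rfl⟩, hx⟩
  · have h2 : 2 ≤ P.ncard := by omega
    have hsq := isSmallest_smallestCanSq (exists_smallestCanSq hfin h2 hPU)
    by_cases hxs : x ∈ smallestCanSq P
    · have hPs : P ∩ smallestCanSq P = P := by
        apply subset_antisymm Set.inter_subset_left
        intro z hz
        exact ⟨hz, hsq.2.1 hz⟩
      exact exists_tile_rec hfin P.ncard (smallestCanSq P) (le_of_eq (by rw [hPs]))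
        (by rw [hPs]; exact h2) (by rw [hPs]; exact hsq) x hxs
    · have hneq : smallestCanSq P ≠ unitSq := by
        intro h
        rw [h] at hxs
        exact hxs hx
      exact ⟨unitSq \ smallestCanSq P, Or.inr (Or.inl ⟨h2, hneq, rfl⟩), hx, hxs⟩

lemma tile_eq {P : Set (ℝ×ℝ)} (hfin : P.Finite) (hPU : P ⊆ unitSq) {f g : Set (ℝ×ℝ)}
    (hf : f ∈ QT P) (hg : g ∈ QT P) {x : ℝ×ℝ} (hxf : x ∈ f) (hxg : x ∈ g) : f = g := by
  by_cases h1 : P.ncard ≤ 1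
  · have key : ∀ h : Set (ℝ×ℝ), h ∈ QT P → h = unitSq := by
      intro h hh
      rcases hh with ⟨_, rfl⟩ | ⟨hn, _, _⟩ | ⟨σ, q, hc, _, _⟩
      · rfl
      · omega
      · exfalso
        have ha := ((critical_iff hfin).mp hc).2.1
        have hb := Set.ncard_le_ncard (Set.inter_subset_left (s := P) (t := σ)) hfin
        omega
    rw [key f hf, key g hg]
  · have h2 : 2 ≤ P.ncard := by omega
    have hsq := isSmallest_smallestCanSq (exists_smallestCanSq hfin h2 hPU)
    have hcs : ∀ σ : Set (ℝ×ℝ), Critical P σ → σ ⊆ smallestCanSq P := by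
      intro σ hc
      have hc' := (critical_iff hfin).mp hc
      exact hc'.2.2.2.2 _ hsq.1 (Set.inter_subset_left.trans hsq.2.1)
    rcases hf with ⟨hf1, _⟩ | ⟨_, _, rfl⟩ | ⟨σ₁, q₁, hc₁, hq₁, hd₁⟩
    · omega
    · rcases hg with ⟨hg1, _⟩ | ⟨_, _, rfl⟩ | ⟨σ₂, q₂, hc₂, hq₂, hd₂⟩
      · omega
      · rfl
      · exfalso
        have hgq : x ∈ q₂ := by
          rcases hd₂ with ⟨_, rfl⟩ | ⟨_, _, rfl⟩
          · exact hxg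
          · exact hxg.1
        obtain ⟨k₂, _, _, hq₂sub⟩ := hq₂
        exact hxf.2 (hcs σ₂ hc₂ (hq₂sub hgq))
    · have hfq : x ∈ q₁ := by
        rcases hd₁ with ⟨_, rfl⟩ | ⟨_, _, rfl⟩
        · exact hxf
        · exact hxf.1
      rcases hg with ⟨hg1, _⟩ | ⟨_, _, rfl⟩ | ⟨σ₂, q₂, hc₂, hq₂, hd₂⟩
      · omega
      · exfalso
        obtain ⟨k₁, _, _, hq₁sub⟩ := id hq₁
        exact hxg.2 (hcs σ₁ hc₁ (hq₁sub hfq))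
      · have hgq : x ∈ q₂ := by
          rcases hd₂ with ⟨_, rfl⟩ | ⟨_, _, rfl⟩
          · exact hxg
          · exact hxg.1
        by_cases hqq : q₁ = q₂
        · subst hqq
          rcases hd₁ with ⟨ha, rfl⟩ | ⟨ha, hb, rfl⟩ <;> rcases hd₂ with ⟨hc', rfl⟩ | ⟨hc', hd', rfl⟩
          · rfl
          · omega
          · omega
          · rfl
        · exfalso
          obtain ⟨k₁', _, hq₁side, _⟩ := id hq₁
          obtain ⟨k₂', _, hq₂side, _⟩ := id hq₂
          have hint : (q₁ ∩ q₂).Nonempty := ⟨x, hfq, hgq⟩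
          rcases IsCanSq.nested_or ⟨_, hq₁side⟩ ⟨_, hq₂side⟩ hint with hsub | hsub
          · exact no_cross hfin hc₁ hq₁ hq₂ hd₂ hsub hqq hfq hxg
          · exact no_cross hfin hc₂ hq₂ hq₁ hd₁ hsub (Ne.symm hqq) hgq hxf


/-- The tiles of `QT(P)` partition the unit square: they are pairwise disjoint
and their union equals `U`. -/
theorem QT_tiles_partition (P : Set (ℝ × ℝ)) (hfin : P.Finite) (hPU : P ⊆ unitSq) :
    (QT P).Pairwise Disjoint ∧ ⋃₀ QT P = unitSq := by
  constructor
  · intro f hf g hg hfg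
    rw [Set.disjoint_left]
    intro x hxf hxg
    exact hfg (tile_eq hfin hPU hf hg hxf hxg)
  · apply subset_antisymm
    · rintro x ⟨f, hf, hxf⟩
      exact tile_subset hf hxf
    · intro x hx
      obtain ⟨f, hf, hxf⟩ := exists_tile hfin hPU hx
      exact ⟨f, hf, hxf⟩
end

section
/- Let S ⊆ U be finite, let p ∈ U \ S, and let f ⊆ U. If f is a tile of QT(S ∪ {p}) but f is not a tile of QT(S), then every subset X ⊆ S ∪ {p} such that f is a tile of QT(X) must contain p; in other words, p belongs to every defining set of a newly created tile. -/
open scoped Classical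

open Set

namespace QTAux

noncomputable section

/-- 1D dyadic interval -/
def dI (k : ℕ) (i : ℤ) : Set ℝ := Set.Ico ((i:ℝ)/2^k) (((i:ℝ)+1)/2^k)

lemma two_pow_pos' (k : ℕ) : (0:ℝ) < 2^k := by positivity

lemma dI_lt (k : ℕ) (i : ℤ) : ((i:ℝ)/2^k) < ((i:ℝ)+1)/2^k :=
  (div_lt_div_iff_of_pos_right (two_pow_pos' k)).mpr (by linarith)

lemma dI_nonempty (k : ℕ) (i : ℤ) : (dI k i).Nonempty :=
  nonempty_Ico.mpr (dI_lt k i)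

lemma mem_dI_iff {k i} {x : ℝ} : x ∈ dI k i ↔ (i:ℝ) ≤ x * 2^k ∧ x * 2^k < (i:ℝ)+1 := by
  constructor
  · rintro ⟨h1, h2⟩
    exact ⟨(div_le_iff₀ (two_pow_pos' k)).mp h1, (lt_div_iff₀ (two_pow_pos' k)).mp h2⟩
  · rintro ⟨h1, h2⟩
    exact ⟨(div_le_iff₀ (two_pow_pos' k)).mpr h1, (lt_div_iff₀ (two_pow_pos' k)).mpr h2⟩

lemma dI_floor {k i} {x : ℝ} (hx : x ∈ dI k i) : i = ⌊x * 2^k⌋ := by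
  rw [mem_dI_iff] at hx
  exact (Int.floor_eq_iff.mpr ⟨hx.1, by linarith [hx.2]⟩).symm

lemma dI_level_eq {k i i'} {x : ℝ} (h1 : x ∈ dI k i) (h2 : x ∈ dI k i') : i = i' := by
  rw [dI_floor h1, dI_floor h2]

lemma dI_subset_of_inter {k n : ℕ} {i a : ℤ} (hkn : k ≤ n)
    (h : (dI n i ∩ dI k a).Nonempty) : dI n i ⊆ dI k a := by
  obtain ⟨x, hx1, hx2⟩ := h
  rw [mem_dI_iff] at hx1 hx2
  have hM : (0:ℝ) < 2^(n-k) := two_pow_pos' _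
  have hsplit : (2:ℝ)^n = 2^k * 2^(n-k) := by
    rw [← pow_add]; congr 1; omega
  -- integer bounds
  have key1 : (a:ℝ) * 2^(n-k) ≤ (i:ℝ) := by
    have h1 : (a:ℝ) * 2^(n-k) < (i:ℝ) + 1 := by
      have : (a:ℝ) * 2^(n-k) ≤ x * 2^k * 2^(n-k) := by nlinarith [hx2.1]
      calc (a:ℝ) * 2^(n-k) ≤ x * 2^k * 2^(n-k) := this
        _ = x * 2^n := by rw [hsplit]; ring
        _ < (i:ℝ) + 1 := hx1.2
    have : ((a * 2^(n-k) : ℤ) : ℝ) < ((i + 1 : ℤ) : ℝ) := by push_cast; push_cast at h1; linarith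
    have := Int.cast_lt.mp this
    have : a * 2^(n-k) ≤ i := by omega
    calc (a:ℝ) * 2^(n-k) = ((a * 2^(n-k) : ℤ) : ℝ) := by push_cast; ring
      _ ≤ (i:ℝ) := by exact_mod_cast this
  have key2 : (i:ℝ) + 1 ≤ ((a:ℝ) + 1) * 2^(n-k) := by
    have h1 : (i:ℝ) < ((a:ℝ) + 1) * 2^(n-k) := by
      calc (i:ℝ) ≤ x * 2^n := hx1.1
        _ = x * 2^k * 2^(n-k) := by rw [hsplit]; ring
        _ < ((a:ℝ)+1) * 2^(n-k) := by nlinarith [hx2.2]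
    have h2 : ((i:ℤ):ℝ) < (((a+1) * 2^(n-k) : ℤ) : ℝ) := by push_cast; push_cast at h1; linarith
    have := Int.cast_lt.mp h2
    have : i + 1 ≤ (a+1) * 2^(n-k) := by omega
    calc (i:ℝ) + 1 = ((i + 1 : ℤ) : ℝ) := by push_cast; ring
      _ ≤ (((a+1) * 2^(n-k) : ℤ) : ℝ) := by exact_mod_cast this
      _ = ((a:ℝ)+1) * 2^(n-k) := by push_cast; ring
  intro y hy
  rw [mem_dI_iff] at hy ⊢
  constructor
  · have : (a:ℝ) * 2^(n-k) ≤ y * 2^k * 2^(n-k) := by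
      calc (a:ℝ) * 2^(n-k) ≤ (i:ℝ) := key1
        _ ≤ y * 2^n := hy.1
        _ = y * 2^k * 2^(n-k) := by rw [hsplit]; ring
    exact le_of_mul_le_mul_right this hM
  · have : y * 2^k * 2^(n-k) < ((a:ℝ)+1) * 2^(n-k) := by
      calc y * 2^k * 2^(n-k) = y * 2^n := by rw [hsplit]; ring
        _ < (i:ℝ) + 1 := hy.2
        _ ≤ ((a:ℝ)+1) * 2^(n-k) := key2
    exact lt_of_mul_lt_mul_right this hM.le

lemma dI_subset_level {n k : ℕ} {i a : ℤ} (h : dI n i ⊆ dI k a) : k ≤ n := by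
  rw [dI, dI, Ico_subset_Ico_iff (dI_lt n i)] at h
  have hlen : (1:ℝ)/2^n ≤ 1/2^k := by
    have e1 : ((i:ℝ)+1)/2^n - (i:ℝ)/2^n = 1/2^n := by ring
    have e2 : ((a:ℝ)+1)/2^k - (a:ℝ)/2^k = 1/2^k := by ring
    nlinarith [h.1, h.2]
  have : (2:ℝ)^k ≤ 2^n := by
    rw [div_le_div_iff₀ (two_pow_pos' n) (two_pow_pos' k)] at hlen
    linarith
  exact (pow_le_pow_iff_right₀ (by norm_num : (1:ℝ) < 2)).mp this

lemma dI_inj {n k : ℕ} {i a : ℤ} (h : dI n i = dI k a) : n = k ∧ i = a := by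
  have h1 : k ≤ n := dI_subset_level h.le
  have h2 : n ≤ k := dI_subset_level h.ge
  have hnk : n = k := le_antisymm h2 h1
  subst hnk
  refine ⟨rfl, ?_⟩
  have := ((Ico_eq_Ico_iff (Or.inl (dI_lt n i))).mp h).1
  have : (i:ℝ) = a := by
    field_simp at this; exact_mod_cast this
  exact_mod_cast this

end
end QTAux
namespace QTAux
noncomputable section
open Set

lemma canSq_eq (k : ℕ) (i j : ℤ) : canSq k i j = dI k i ×ˢ dI k j := rfl

lemma canSq_nonempty (k : ℕ) (i j : ℤ) : (canSq k i j).Nonempty :=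
  (dI_nonempty k i).prod (dI_nonempty k j)

lemma canSq_inj {n k : ℕ} {i j a b : ℤ} (h : canSq n i j = canSq k a b) :
    n = k ∧ i = a ∧ j = b := by
  rw [canSq_eq, canSq_eq, Set.prod_eq_prod_iff_of_nonempty
    ((dI_nonempty n i).prod (dI_nonempty n j))] at h
  obtain ⟨h1, h2⟩ := h
  obtain ⟨hnk, hia⟩ := dI_inj h1
  obtain ⟨-, hjb⟩ := dI_inj h2
  exact ⟨hnk, hia, hjb⟩

lemma canSq_subset_of_inter {n k : ℕ} {i j a b : ℤ} (hkn : k ≤ n)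
    (h : (canSq n i j ∩ canSq k a b).Nonempty) : canSq n i j ⊆ canSq k a b := by
  obtain ⟨x, hx1, hx2⟩ := h
  rw [canSq_eq] at hx1 hx2 ⊢
  rw [canSq_eq]
  exact Set.prod_mono (dI_subset_of_inter hkn ⟨x.1, hx1.1, hx2.1⟩)
    (dI_subset_of_inter hkn ⟨x.2, hx1.2, hx2.2⟩)

lemma canSq_subset_level {n k : ℕ} {i j a b : ℤ} (h : canSq n i j ⊆ canSq k a b) : k ≤ n := by
  apply dI_subset_level (n := n) (i := i) (a := a)
  intro x hx
  obtain ⟨y, hy⟩ := dI_nonempty n j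
  have hm : ((x, y) : ℝ × ℝ) ∈ canSq n i j := Set.mk_mem_prod hx hy
  exact (h hm).1

lemma canSq_same_level {k : ℕ} {i j a b : ℤ} {x : ℝ × ℝ} (h1 : x ∈ canSq k i j)
    (h2 : x ∈ canSq k a b) : canSq k i j = canSq k a b := by
  obtain rfl : i = a := dI_level_eq h1.1 h2.1
  obtain rfl : j = b := dI_level_eq h1.2 h2.2
  rfl

lemma unitSq_eq : unitSq = canSq 0 0 0 := by
  simp [unitSq, canSq]

lemma canSq_subset_unitSq {k : ℕ} {i j : ℤ} (hi0 : 0 ≤ i) (hi : i < 2^k)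
    (hj0 : 0 ≤ j) (hj : j < 2^k) : canSq k i j ⊆ unitSq := by
  have H : ∀ m : ℤ, 0 ≤ m → m < 2^k → dI k m ⊆ Set.Ico (0:ℝ) 1 := by
    intro m h0 h1
    apply Set.Ico_subset_Ico
    · exact div_nonneg (by exact_mod_cast h0) (two_pow_pos' k).le
    · rw [div_le_one (two_pow_pos' k)]
      have h2 : m + 1 ≤ (2:ℤ)^k := h1
      have h3 : ((m + 1 : ℤ) : ℝ) ≤ (((2:ℤ)^k : ℤ) : ℝ) := by exact_mod_cast h2
      push_cast at h3; linarith
  rw [canSq_eq, unitSq]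
  exact Set.prod_mono (H i hi0 hi) (H j hj0 hj)

lemma IsCanSqSide.subset_unit {k : ℕ} {σ : Set (ℝ × ℝ)} (h : IsCanSqSide k σ) :
    σ ⊆ unitSq := by
  obtain ⟨i, j, hi0, hi, hj0, hj, rfl⟩ := h
  exact canSq_subset_unitSq hi0 hi hj0 hj

lemma side_nonempty {k : ℕ} {σ : Set (ℝ × ℝ)} (h : IsCanSqSide k σ) : σ.Nonempty := by
  obtain ⟨i, j, -, -, -, -, rfl⟩ := h; exact canSq_nonempty k i j

lemma isCanSq_nonempty {σ : Set (ℝ × ℝ)} (h : IsCanSq σ) : σ.Nonempty := by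
  obtain ⟨k, hk⟩ := h; exact side_nonempty hk

lemma isCanSq_subset_unit {σ : Set (ℝ × ℝ)} (h : IsCanSq σ) : σ ⊆ unitSq := by
  obtain ⟨k, hk⟩ := h; exact IsCanSqSide.subset_unit hk

lemma side_level_eq {k n : ℕ} {σ : Set (ℝ × ℝ)} (h1 : IsCanSqSide k σ)
    (h2 : IsCanSqSide n σ) : k = n := by
  obtain ⟨i, j, -, -, -, -, rfl⟩ := h1
  obtain ⟨a, b, -, -, -, -, h⟩ := h2
  exact (canSq_inj h).1

lemma isCanSqSide_unitSq : IsCanSqSide 0 unitSq :=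
  ⟨0, 0, le_refl _, by norm_num, le_refl _, by norm_num, unitSq_eq⟩

lemma side_subset_of_inter {n k : ℕ} {σ τ : Set (ℝ × ℝ)} (hσ : IsCanSqSide n σ)
    (hτ : IsCanSqSide k τ) (hkn : k ≤ n) (h : (σ ∩ τ).Nonempty) : σ ⊆ τ := by
  obtain ⟨i, j, -, -, -, -, rfl⟩ := hσ
  obtain ⟨a, b, -, -, -, -, rfl⟩ := hτ
  exact canSq_subset_of_inter hkn h

lemma side_eq_of_inter {k : ℕ} {σ τ : Set (ℝ × ℝ)} (hσ : IsCanSqSide k σ)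
    (hτ : IsCanSqSide k τ) (h : (σ ∩ τ).Nonempty) : σ = τ := by
  obtain ⟨i, j, -, -, -, -, rfl⟩ := hσ
  obtain ⟨a, b, -, -, -, -, rfl⟩ := hτ
  obtain ⟨x, hx1, hx2⟩ := h
  exact canSq_same_level hx1 hx2

lemma side_level_le_of_subset {n k : ℕ} {σ τ : Set (ℝ × ℝ)} (hσ : IsCanSqSide n σ)
    (hτ : IsCanSqSide k τ) (h : σ ⊆ τ) : k ≤ n := by
  obtain ⟨i, j, -, -, -, -, rfl⟩ := hσ
  obtain ⟨a, b, -, -, -, -, rfl⟩ := hτ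
  exact canSq_subset_level h

lemma exists_mem_side (k : ℕ) {x : ℝ × ℝ} (hx : x ∈ unitSq) :
    ∃ σ, IsCanSqSide k σ ∧ x ∈ σ := by
  have h1 : x.1 ∈ Set.Ico (0:ℝ) 1 := hx.1
  have h2 : x.2 ∈ Set.Ico (0:ℝ) 1 := hx.2
  have key : ∀ y : ℝ, y ∈ Set.Ico (0:ℝ) 1 →
      0 ≤ ⌊y * 2^k⌋ ∧ ⌊y * 2^k⌋ < 2^k ∧ y ∈ dI k ⌊y * 2^k⌋ := by
    intro y hy
    refine ⟨Int.floor_nonneg.mpr (by nlinarith [hy.1, (two_pow_pos' k)]), ?_, ?_⟩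
    · rw [Int.floor_lt]
      push_cast
      nlinarith [hy.2, two_pow_pos' k]
    · rw [mem_dI_iff]
      exact ⟨Int.floor_le _, Int.lt_floor_add_one _⟩
  obtain ⟨u0, u1, u2⟩ := key x.1 h1
  obtain ⟨v0, v1, v2⟩ := key x.2 h2
  exact ⟨canSq k ⌊x.1 * 2^k⌋ ⌊x.2 * 2^k⌋, ⟨_, _, u0, u1, v0, v1, rfl⟩,
    Set.mk_mem_prod u2 v2⟩

lemma exists_isSmallest {P : Set (ℝ × ℝ)} (hPU : P ⊆ unitSq) (hfin : P.Finite)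
    (h2 : 2 ≤ P.ncard) : ∃ σ, IsSmallestCanSq P σ := by
  obtain ⟨a, b, ha, hb, hab⟩ := (Set.one_lt_ncard_iff hfin).mp h2
  set d : ℝ := max |a.1 - b.1| |a.2 - b.2| with hd
  have hdpos : 0 < d := by
    have : a.1 ≠ b.1 ∨ a.2 ≠ b.2 := by
      by_contra hc
      push_neg at hc
      exact hab (Prod.ext hc.1 hc.2)
    rcases this with h | h
    · exact lt_max_of_lt_left (abs_pos.mpr (sub_ne_zero.mpr h))
    · exact lt_max_of_lt_right (abs_pos.mpr (sub_ne_zero.mpr h))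
  obtain ⟨N, hN⟩ := pow_unbounded_of_one_lt (1/d) (by norm_num : (1:ℝ) < 2)
  have bound : ∀ (k : ℕ) (σ : Set (ℝ × ℝ)), IsCanSqSide k σ → P ⊆ σ → k ≤ N := by
    intro k σ hσ hPσ
    obtain ⟨i, j, -, -, -, -, rfl⟩ := hσ
    have haσ := hPσ ha
    have hbσ := hPσ hb
    have c1 : |a.1 - b.1| * 2^k < 1 := by
      have u1 := mem_dI_iff.mp haσ.1
      have u2 := mem_dI_iff.mp hbσ.1
      have : |a.1 * 2^k - b.1 * 2^k| < 1 := by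
        rw [abs_sub_lt_iff]; constructor <;> nlinarith [u1.1, u1.2, u2.1, u2.2]
      calc |a.1 - b.1| * 2^k = |(a.1 - b.1) * 2^k| := by
            rw [abs_mul, abs_of_pos (two_pow_pos' k)]
        _ = |a.1 * 2^k - b.1 * 2^k| := by ring_nf
        _ < 1 := this
    have c2 : |a.2 - b.2| * 2^k < 1 := by
      have u1 := mem_dI_iff.mp haσ.2
      have u2 := mem_dI_iff.mp hbσ.2
      have : |a.2 * 2^k - b.2 * 2^k| < 1 := by
        rw [abs_sub_lt_iff]; constructor <;> nlinarith [u1.1, u1.2, u2.1, u2.2]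
      calc |a.2 - b.2| * 2^k = |(a.2 - b.2) * 2^k| := by
            rw [abs_mul, abs_of_pos (two_pow_pos' k)]
        _ = |a.2 * 2^k - b.2 * 2^k| := by ring_nf
        _ < 1 := this
    have cd : d * 2^k < 1 := by
      rcases max_choice |a.1 - b.1| |a.2 - b.2| with h | h <;> rw [hd, h]
      · exact c1
      · exact c2
    have : (2:ℝ)^k < 2^N := by
      have h1 : (2:ℝ)^k < 1/d := by
        rw [lt_div_iff₀ hdpos]; nlinarith
      linarith
    exact le_of_lt ((pow_lt_pow_iff_right₀ (by norm_num : (1:ℝ) < 2)).mp this)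
  classical
  set Q : ℕ → Prop := fun k => ∃ σ, IsCanSqSide k σ ∧ P ⊆ σ with hQ
  have hQ0 : Q 0 := ⟨unitSq, isCanSqSide_unitSq, hPU⟩
  have hk₀ : Q (Nat.findGreatest Q N) := Nat.findGreatest_spec (Nat.zero_le N) hQ0
  obtain ⟨σ₀, hσ₀, hPσ₀⟩ := hk₀
  refine ⟨σ₀, ⟨_, hσ₀⟩, hPσ₀, ?_⟩
  rintro τ ⟨m, hτ⟩ hPτ
  have hmN : m ≤ N := bound m τ hτ hPτ
  have hm : m ≤ Nat.findGreatest Q N := Nat.le_findGreatest hmN ⟨τ, hτ, hPτ⟩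
  exact side_subset_of_inter hσ₀ hτ hm ⟨a, hPσ₀ ha, hPτ ha⟩

lemma isSmallest_unique {P σ τ : Set (ℝ × ℝ)} (h1 : IsSmallestCanSq P σ)
    (h2 : IsSmallestCanSq P τ) : σ = τ :=
  subset_antisymm (h1.2.2 τ h2.1 h2.2.1) (h2.2.2 σ h1.1 h1.2.1)

lemma smallestCanSq_spec {P : Set (ℝ × ℝ)} (hex : ∃ σ, IsSmallestCanSq P σ) :
    IsSmallestCanSq P (smallestCanSq P) := by
  rw [smallestCanSq, dif_pos hex]
  exact hex.choose_spec

lemma smallestCanSq_eq {P σ : Set (ℝ × ℝ)} (h : IsSmallestCanSq P σ) :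
    smallestCanSq P = σ :=
  isSmallest_unique (smallestCanSq_spec ⟨σ, h⟩) h

end
end QTAux
namespace QTAux
noncomputable section
open Set MeasureTheory

lemma vol_dI (k : ℕ) (i : ℤ) : volume (dI k i) = ENNReal.ofReal (1/2^k) := by
  rw [dI, Real.volume_Ico]
  congr 1
  field_simp
  ring

lemma vol_canSq (k : ℕ) (i j : ℤ) : volume (canSq k i j) = ENNReal.ofReal (1/4^k) := by
  rw [canSq_eq, Measure.volume_eq_prod, Measure.prod_prod, vol_dI, vol_dI,
    ← ENNReal.ofReal_mul (by positivity)]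
  congr 1
  rw [div_mul_div_comm, one_mul, ← mul_pow]
  norm_num

lemma vol_unitSq : volume unitSq = ENNReal.ofReal 1 := by
  rw [unitSq_eq, vol_canSq]
  norm_num

lemma side_vol {n : ℕ} {σ : Set (ℝ × ℝ)} (h : IsCanSqSide n σ) :
    volume σ = ENNReal.ofReal (1/4^n) := by
  obtain ⟨i, j, -, -, -, -, rfl⟩ := h
  exact vol_canSq n i j

lemma side_meas {n : ℕ} {σ : Set (ℝ × ℝ)} (h : IsCanSqSide n σ) :
    NullMeasurableSet σ volume := by
  obtain ⟨i, j, -, -, -, -, rfl⟩ := h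
  exact (measurableSet_Ico.prod measurableSet_Ico).nullMeasurableSet

lemma vol_diff {A B : Set (ℝ × ℝ)} {a b : ℝ} (hBA : B ⊆ A) (hb0 : 0 ≤ b)
    (hA : volume A = ENNReal.ofReal a) (hB : volume B = ENNReal.ofReal b)
    (hBm : NullMeasurableSet B volume) :
    volume (A \ B) = ENNReal.ofReal (a - b) := by
  rw [measure_diff hBA hBm (by rw [hB]; exact ENNReal.ofReal_ne_top), hA, hB,
    ← ENNReal.ofReal_sub _ hb0]

lemma ofReal_inj {a b : ℝ} (ha : 0 ≤ a) (hb : 0 ≤ b)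
    (h : ENNReal.ofReal a = ENNReal.ofReal b) : a = b := by
  rwa [ENNReal.ofReal_eq_ofReal_iff ha hb] at h

lemma arith_pow4 {k n : ℕ} (h : k ≤ n) : (1:ℝ)/4^n ≤ 1/4^k :=
  one_div_le_one_div_of_le (by positivity) (pow_le_pow_right₀ (by norm_num) h)

lemma pow4_pos (k : ℕ) : (0:ℝ) < 1/4^k := by positivity

lemma pow4_succ {m n : ℕ} (h : m + 1 ≤ n) : (1:ℝ)/4^n ≤ 1/4 * (1/4^m) :=
  calc (1:ℝ)/4^n ≤ 1/4^(m+1) := arith_pow4 h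
    _ = 1/4 * (1/4^m) := by rw [pow_succ]; ring

lemma pow4_lt {k m : ℕ} (h : (1:ℝ)/4^m < 1/4^k) : k < m := by
  by_contra hc
  push_neg at hc
  exact absurd (arith_pow4 hc) (not_le.mpr h)

lemma ne_unit_diff {σ : Set (ℝ × ℝ)} (hσ : IsCanSq σ) : unitSq ≠ unitSq \ σ := by
  obtain ⟨x, hx⟩ := isCanSq_nonempty hσ
  have hxU : x ∈ unitSq := isCanSq_subset_unit hσ hx
  intro h
  exact (h ▸ hxU).2 hx

lemma side_level_pos {k : ℕ} {σ : Set (ℝ × ℝ)} (hσ : IsCanSqSide k σ)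
    (hne : σ ≠ unitSq) : 1 ≤ k := by
  rcases Nat.eq_zero_or_pos k with rfl | h
  · exfalso
    obtain ⟨i, j, hi0, hi, hj0, hj, rfl⟩ := hσ
    have hi1 : i = 0 := by omega
    have hj1 : j = 0 := by omega
    subst hi1; subst hj1
    exact hne unitSq_eq.symm
  · exact h

lemma strict_level {q τ : Set (ℝ × ℝ)} {k n : ℕ} (hq : IsCanSqSide k q)
    (hτ : IsCanSqSide n τ) (hsub : τ ⊆ q) (hne : τ ≠ q) : k + 1 ≤ n := by
  have hkn : k ≤ n := side_level_le_of_subset hτ hq hsub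
  rcases eq_or_lt_of_le hkn with rfl | h
  · exfalso
    obtain ⟨x, hx⟩ := side_nonempty hτ
    exact hne (side_eq_of_inter hτ hq ⟨x, hx, hsub hx⟩)
  · omega

lemma critical_mono {X Y σ : Set (ℝ × ℝ)} (h : Critical X σ) (hXY : X ⊆ Y) :
    Critical Y σ := by
  obtain ⟨hc, q₁, q₂, a1, a2, a3, a4, a5⟩ := h
  exact ⟨hc, q₁, q₂, a1, a2, a3, a4.mono (Set.inter_subset_inter_left _ hXY),
    a5.mono (Set.inter_subset_inter_left _ hXY)⟩

lemma QT_elim {P f : Set (ℝ × ℝ)} (hPU : P ⊆ unitSq) (hfin : P.Finite) (h : f ∈ QT P) :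
    (P.ncard ≤ 1 ∧ f = unitSq)
    ∨ (∃ (k : ℕ) (σ : Set (ℝ × ℝ)), 2 ≤ P.ncard ∧ IsCanSqSide k σ ∧ 1 ≤ k ∧
        IsSmallestCanSq P σ ∧ σ ≠ unitSq ∧ f = unitSq \ σ)
    ∨ (∃ (σ₀ q : Set (ℝ × ℝ)) (m : ℕ), Critical P σ₀ ∧ IsQuadrantOf q σ₀ ∧
        IsCanSqSide m q ∧ 1 ≤ m ∧ (P ∩ q).ncard ≤ 1 ∧ f = q)
    ∨ (∃ (σ₀ q τ : Set (ℝ × ℝ)) (m n : ℕ), Critical P σ₀ ∧ IsQuadrantOf q σ₀ ∧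
        IsCanSqSide m q ∧ 1 ≤ m ∧ IsCanSqSide n τ ∧ m + 1 ≤ n ∧ 2 ≤ (P ∩ q).ncard ∧
        IsSmallestCanSq (P ∩ q) τ ∧ τ ⊆ q ∧ τ ≠ q ∧ f = q \ τ) := by
  rcases h with ⟨h1, h2⟩ | ⟨h1, h2, h3⟩ | ⟨σ₀, q, hcrit, hquad, hcase⟩
  · exact Or.inl ⟨h1, h2⟩
  · have hex := exists_isSmallest hPU hfin h1
    have hsp := smallestCanSq_spec hex
    obtain ⟨k, hside⟩ := hsp.1
    exact Or.inr (Or.inl ⟨k, smallestCanSq P, h1, hside, side_level_pos hside h2, hsp, h2, h3⟩)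
  · obtain ⟨k, hσside, hqside, hqsub⟩ := hquad
    rcases hcase with ⟨hle, heq⟩ | ⟨h2c, hne, heq⟩
    · exact Or.inr (Or.inr (Or.inl ⟨σ₀, q, k+1, hcrit, ⟨k, hσside, hqside, hqsub⟩,
        hqside, by omega, hle, heq⟩))
    · have hsubU : P ∩ q ⊆ unitSq := (Set.inter_subset_left).trans hPU
      have hexq := exists_isSmallest hsubU (hfin.inter_of_left q) h2c
      have hsp := smallestCanSq_spec hexq
      have hτsub : smallestCanSq (P ∩ q) ⊆ q := hsp.2.2 q ⟨k+1, hqside⟩ Set.inter_subset_right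
      obtain ⟨n, hτside⟩ := hsp.1
      exact Or.inr (Or.inr (Or.inr ⟨σ₀, q, smallestCanSq (P ∩ q), k+1, n, hcrit,
        ⟨k, hσside, hqside, hqsub⟩, hqside, by omega, hτside,
        strict_level hqside hτside hτsub hne, h2c, hsp, hτsub, hne, heq⟩))

end
end QTAux
namespace QTAux
noncomputable section
open Set MeasureTheory

lemma sandwich {X Y Z f : Set (ℝ × ℝ)} (hXY : X ⊆ Y) (hYZ : Y ⊆ Z)
    (hZU : Z ⊆ unitSq) (hZfin : Z.Finite) (hX : f ∈ QT X) (hZf : f ∈ QT Z) :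
    f ∈ QT Y := by
  have hYfin := hZfin.subset hYZ
  have hXfin := hYfin.subset hXY
  have hYU := hYZ.trans hZU
  have hXU := hXY.trans hYU
  rcases QT_elim hXU hXfin hX with ⟨xa, xb⟩ |
    ⟨k, σ, x2, xs, xk, xsm, xne, xe⟩ |
    ⟨σ₀, q, m, xcr, xqd, xqs, xm, x1, xe⟩ |
    ⟨σ₀, q, τ, m, n, xcr, xqd, xqs, xm, xts, xmn, x2, xsm, xsub, xne, xe⟩
  -- X case 1 : f = unitSq
  · rcases QT_elim hZU hZfin hZf with ⟨za, zb⟩ |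
      ⟨k', σ', z2, zs, zk, zsm, zne, ze⟩ |
      ⟨σ₀', q', m', zcr, zqd, zqs, zm, z1, ze⟩ |
      ⟨σ₀', q', τ', m', n', zcr, zqd, zqs, zm, zts, zmn, z2, zsm, zsub, zne, ze⟩
    · exact Or.inl ⟨le_trans (Set.ncard_le_ncard hYZ hZfin) za, xb⟩
    · exact absurd (xb.symm.trans ze) (ne_unit_diff ⟨k', zs⟩)
    · exfalso
      have v1 : volume f = ENNReal.ofReal 1 := by rw [xb]; exact vol_unitSq
      have v2 : volume f = ENNReal.ofReal (1/4^m') := by rw [ze]; exact side_vol zqs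
      have := ofReal_inj (by norm_num) (pow4_pos m').le (v1.symm.trans v2)
      nlinarith [arith_pow4 zm]
    · exfalso
      have v1 : volume f = ENNReal.ofReal 1 := by rw [xb]; exact vol_unitSq
      have v2 : volume f = ENNReal.ofReal (1/4^m' - 1/4^n') := by
        rw [ze]
        exact vol_diff zsub (pow4_pos n').le (side_vol zqs) (side_vol zts) (side_meas zts)
      have := ofReal_inj (by norm_num)
        (sub_nonneg.mpr (arith_pow4 (by omega))) (v1.symm.trans v2)
      nlinarith [arith_pow4 zm, pow4_pos n']
  -- X case 2 : f = unitSq \ σ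
  · have v1 : volume f = ENNReal.ofReal (1 - 1/4^k) := by
      rw [xe]
      exact vol_diff (IsCanSqSide.subset_unit xs) (pow4_pos k).le vol_unitSq
        (side_vol xs) (side_meas xs)
    have hv1 : (0:ℝ) ≤ 1 - 1/4^k := by
      have h0 : (1:ℝ)/4^0 = 1 := by norm_num
      linarith [arith_pow4 (Nat.zero_le k)]
    rcases QT_elim hZU hZfin hZf with ⟨za, zb⟩ |
      ⟨k', σ', z2, zs, zk, zsm, zne, ze⟩ |
      ⟨σ₀', q', m', zcr, zqd, zqs, zm, z1, ze⟩ |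
      ⟨σ₀', q', τ', m', n', zcr, zqd, zqs, zm, zts, zmn, z2, zsm, zsub, zne, ze⟩
    · exfalso
      have := Set.ncard_le_ncard (hXY.trans hYZ) hZfin
      omega
    · have hσU : σ ⊆ unitSq := IsCanSqSide.subset_unit xs
      have hσ'U : σ' ⊆ unitSq := IsCanSqSide.subset_unit zs
      have hσeq : σ = σ' := by
        have h1 : unitSq \ σ = unitSq \ σ' := xe.symm.trans ze
        calc σ = unitSq \ (unitSq \ σ) := (Set.diff_diff_cancel_left hσU).symm
          _ = unitSq \ (unitSq \ σ') := by rw [h1]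
          _ = σ' := Set.diff_diff_cancel_left hσ'U
      have hY2 : 2 ≤ Y.ncard := le_trans x2 (Set.ncard_le_ncard hXY hYfin)
      have hexY := exists_isSmallest hYU hYfin hY2
      have hspY := smallestCanSq_spec hexY
      have hsub1 : σ ⊆ smallestCanSq Y := xsm.2.2 _ hspY.1 (hXY.trans hspY.2.1)
      have hsub2 : smallestCanSq Y ⊆ σ' := hspY.2.2 σ' zsm.1 (hYZ.trans zsm.2.1)
      have hYeq : smallestCanSq Y = σ := subset_antisymm (hσeq ▸ hsub2) hsub1
      exact Or.inr (Or.inl ⟨hY2, by rw [hYeq]; exact xne, by rw [hYeq]; exact xe⟩)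
    · exfalso
      have v2 : volume f = ENNReal.ofReal (1/4^m') := by rw [ze]; exact side_vol zqs
      have := ofReal_inj hv1 (pow4_pos m').le (v1.symm.trans v2)
      have a1 := arith_pow4 xk
      have a2 := arith_pow4 zm
      nlinarith
    · exfalso
      have v2 : volume f = ENNReal.ofReal (1/4^m' - 1/4^n') := by
        rw [ze]
        exact vol_diff zsub (pow4_pos n').le (side_vol zqs) (side_vol zts) (side_meas zts)
      have := ofReal_inj hv1 (sub_nonneg.mpr (arith_pow4 (by omega))) (v1.symm.trans v2)
      have a1 := arith_pow4 xk
      have a2 := arith_pow4 zm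
      have a3 := pow4_pos n'
      nlinarith
  -- X case 3 : f = q
  · have v1 : volume f = ENNReal.ofReal (1/4^m) := by rw [xe]; exact side_vol xqs
    rcases QT_elim hZU hZfin hZf with ⟨za, zb⟩ |
      ⟨k', σ', z2, zs, zk, zsm, zne, ze⟩ |
      ⟨σ₀', q', m', zcr, zqd, zqs, zm, z1, ze⟩ |
      ⟨σ₀', q', τ', m', n', zcr, zqd, zqs, zm, zts, zmn, z2, zsm, zsub, zne, ze⟩
    · exfalso
      have v2 : volume f = ENNReal.ofReal 1 := by rw [zb]; exact vol_unitSq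
      have := ofReal_inj (pow4_pos m).le (by norm_num) (v1.symm.trans v2)
      nlinarith [arith_pow4 xm]
    · exfalso
      have v2 : volume f = ENNReal.ofReal (1 - 1/4^k') := by
        rw [ze]
        exact vol_diff (IsCanSqSide.subset_unit zs) (pow4_pos k').le vol_unitSq
          (side_vol zs) (side_meas zs)
      have hv2 : (0:ℝ) ≤ 1 - 1/4^k' := by
        have h0 : (1:ℝ)/4^0 = 1 := by norm_num
        linarith [arith_pow4 (Nat.zero_le k')]
      have := ofReal_inj (pow4_pos m).le hv2 (v1.symm.trans v2)
      have a1 := arith_pow4 xm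
      have a2 := arith_pow4 zk
      nlinarith
    · have hqq : q = q' := xe.symm.trans ze
      have hsub : Y ∩ q ⊆ Z ∩ q' := by
        rw [hqq]; exact Set.inter_subset_inter_left _ hYZ
      exact Or.inr (Or.inr ⟨σ₀, q, critical_mono xcr hXY, xqd,
        Or.inl ⟨le_trans (Set.ncard_le_ncard hsub (hZfin.inter_of_left q')) z1, xe⟩⟩)
    · exfalso
      have v2 : volume f = ENNReal.ofReal (1/4^m' - 1/4^n') := by
        rw [ze]
        exact vol_diff zsub (pow4_pos n').le (side_vol zqs) (side_vol zts) (side_meas zts)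
      have he := ofReal_inj (pow4_pos m).le
        (sub_nonneg.mpr (arith_pow4 (by omega))) (v1.symm.trans v2)
      have hlt : (1:ℝ)/4^m < 1/4^m' := by nlinarith [pow4_pos n']
      have hm' : m' < m := pow4_lt hlt
      have b1 := pow4_succ (show m' + 1 ≤ m by omega)
      have b2 := pow4_succ zmn
      nlinarith [pow4_pos m']
  -- X case 4 : f = q \ τ
  · have v1 : volume f = ENNReal.ofReal (1/4^m - 1/4^n) := by
      rw [xe]
      exact vol_diff xsub (pow4_pos n).le (side_vol xqs) (side_vol xts) (side_meas xts)
    have hv1 : (0:ℝ) ≤ 1/4^m - 1/4^n := sub_nonneg.mpr (arith_pow4 (by omega))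
    rcases QT_elim hZU hZfin hZf with ⟨za, zb⟩ |
      ⟨k', σ', z2, zs, zk, zsm, zne, ze⟩ |
      ⟨σ₀', q', m', zcr, zqd, zqs, zm, z1, ze⟩ |
      ⟨σ₀', q', τ', m', n', zcr, zqd, zqs, zm, zts, zmn, z2, zsm, zsub, zne, ze⟩
    · exfalso
      have v2 : volume f = ENNReal.ofReal 1 := by rw [zb]; exact vol_unitSq
      have := ofReal_inj hv1 (by norm_num) (v1.symm.trans v2)
      nlinarith [arith_pow4 xm, pow4_pos n]
    · exfalso
      have v2 : volume f = ENNReal.ofReal (1 - 1/4^k') := by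
        rw [ze]
        exact vol_diff (IsCanSqSide.subset_unit zs) (pow4_pos k').le vol_unitSq
          (side_vol zs) (side_meas zs)
      have hv2 : (0:ℝ) ≤ 1 - 1/4^k' := by
        have h0 : (1:ℝ)/4^0 = 1 := by norm_num
        linarith [arith_pow4 (Nat.zero_le k')]
      have := ofReal_inj hv1 hv2 (v1.symm.trans v2)
      have a1 := arith_pow4 xm
      have a2 := arith_pow4 zk
      have a3 := pow4_pos n
      nlinarith
    · exfalso
      have v2 : volume f = ENNReal.ofReal (1/4^m') := by rw [ze]; exact side_vol zqs
      have he := ofReal_inj (pow4_pos m').le hv1 (v2.symm.trans v1)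
      have hlt : (1:ℝ)/4^m' < 1/4^m := by nlinarith [pow4_pos n]
      have hm' : m < m' := pow4_lt hlt
      have b1 := pow4_succ (show m + 1 ≤ m' by omega)
      have b2 := pow4_succ xmn
      nlinarith [pow4_pos m]
    · -- both annuli
      have v2 : volume f = ENNReal.ofReal (1/4^m' - 1/4^n') := by
        rw [ze]
        exact vol_diff zsub (pow4_pos n').le (side_vol zqs) (side_vol zts) (side_meas zts)
      have hv2 : (0:ℝ) ≤ 1/4^m' - 1/4^n' := sub_nonneg.mpr (arith_pow4 (by omega))
      have he := ofReal_inj hv1 hv2 (v1.symm.trans v2)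
      have hmm : m = m' := by
        by_contra hne'
        rcases Nat.lt_or_ge m m' with h | h
        · have b1 := pow4_succ (show m + 1 ≤ m' by omega)
          have b2 := pow4_succ xmn
          have := pow4_pos n'
          have := pow4_pos m
          linarith
        · have b1 := pow4_succ (show m' + 1 ≤ m by omega)
          have b2 := pow4_succ zmn
          have := pow4_pos n
          have := pow4_pos m'
          linarith
      have hqq : q = q' := by
        obtain ⟨x, hxq, hxτ⟩ := Set.exists_of_ssubset (HasSubset.Subset.ssubset_of_ne xsub xne)
        have hxf : x ∈ f := by rw [xe]; exact ⟨hxq, hxτ⟩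
        have hxq' : x ∈ q' := by rw [ze] at hxf; exact hxf.1
        exact side_eq_of_inter xqs (hmm ▸ zqs) ⟨x, hxq, hxq'⟩
      have hττ : τ = τ' := by
        calc τ = q \ (q \ τ) := (Set.diff_diff_cancel_left xsub).symm
          _ = q' \ (q' \ τ') := by rw [← xe, hqq, ze]
          _ = τ' := Set.diff_diff_cancel_left zsub
      have hsubXY : X ∩ q ⊆ Y ∩ q := Set.inter_subset_inter_left _ hXY
      have hY2 : 2 ≤ (Y ∩ q).ncard :=
        le_trans x2 (Set.ncard_le_ncard hsubXY (hYfin.inter_of_left q))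
      have hexY := exists_isSmallest ((Set.inter_subset_left).trans hYU)
        (hYfin.inter_of_left q) hY2
      have hspY := smallestCanSq_spec hexY
      have h1 : τ ⊆ smallestCanSq (Y ∩ q) :=
        xsm.2.2 _ hspY.1 ((Set.inter_subset_inter_left _ hXY).trans hspY.2.1)
      have h2 : smallestCanSq (Y ∩ q) ⊆ τ' := by
        apply hspY.2.2 τ' zsm.1
        intro x hx
        apply zsm.2.1
        rw [← hqq]
        exact ⟨hYZ hx.1, hx.2⟩
      have hYeq : smallestCanSq (Y ∩ q) = τ := subset_antisymm (hττ ▸ h2) h1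
      exact Or.inr (Or.inr ⟨σ₀, q, critical_mono xcr hXY, xqd,
        Or.inr ⟨hY2, by rw [hYeq]; exact xne, by rw [hYeq]; exact xe⟩⟩)

end
end QTAux

/-- A newly created tile has `p` in every defining set: if `f` is a tile of
`QT(S ∪ {p})` but not of `QT(S)`, then every `X ⊆ S ∪ {p}` with `f ∈ QT(X)`
contains `p`. -/
theorem mem_defining_set_of_new_tile (S : Set (ℝ × ℝ)) (hfin : S.Finite)
    (hSU : S ⊆ unitSq) (p : ℝ × ℝ) (hp : p ∈ unitSq \ S) (f : Set (ℝ × ℝ))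
    (hf : f ∈ QT (S ∪ {p})) (hf' : f ∉ QT S) :
    ∀ X : Set (ℝ × ℝ), X ⊆ S ∪ {p} → f ∈ QT X → p ∈ X := by
  intro X hXsub hfX
  by_contra hpX
  have hXS : X ⊆ S := by
    intro x hx
    rcases hXsub hx with h | h
    · exact h
    · rw [Set.mem_singleton_iff] at h
      subst h
      exact absurd hx hpX
  have hZU : S ∪ {p} ⊆ unitSq :=
    Set.union_subset hSU (Set.singleton_subset_iff.mpr hp.1)
  exact hf' (QTAux.sandwich hXS Set.subset_union_left hZU
    (hfin.union (Set.finite_singleton p)) hfX hf)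
end
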